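/- arXiv:2409.19791 — 2 statements merged into one kernel-verified Lean document; each statement's English description precedes it below -/
import Mathlib

section
/- There exists δ > 0 such that for every w = (w₁, w₂) ∈ M with w₁ ≠ 0, w₂ ≠ 0 and dist(w, S) < δ: θ₁‖w₁^⊥‖² + θ₂‖w₂^⊥‖² + (θ₁ + θ₂)‖w₁^⊥‖‖w₂^⊥‖ ≥ 2π · f(w). (Since on M near S the gradient of f is ∇f(w) = (1/(2π))(θ₁w₁ − θ₂w₂, θ₂w₂ − θ₁w₁) and w − P_S(w) = (w₁^⊥, w₂^⊥), this is the aiming inequality ⟨∇f(w), w − P_S(w)⟩ ≥ f(w).) -/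
open scoped RealInnerProductSpace
open InnerProductGeometry

/-- Closed form of the population loss for learning a single ReLU neuron with two
student neurons under Gaussian inputs. -/
noncomputable def nnLoss {d : ℕ} (v : EuclideanSpace ℝ (Fin d))
    (w : EuclideanSpace ℝ (Fin d) × EuclideanSpace ℝ (Fin d)) : ℝ :=
  (1 / 4) * ‖w.1 + w.2 - v‖ ^ 2 +
    (1 / (2 * Real.pi)) *
      ((Real.sin (angle w.1 w.2) - angle w.1 w.2 * Real.cos (angle w.1 w.2)) *
          ‖w.1‖ * ‖w.2‖ -
        ((Real.sin (angle w.1 v) - angle w.1 v * Real.cos (angle w.1 v)) * ‖w.1‖ * ‖v‖ +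
          (Real.sin (angle w.2 v) - angle w.2 v * Real.cos (angle w.2 v)) * ‖w.2‖ * ‖v‖))

/-- The affine subspace (ravine) `M = {(w₁, w₂) : w₁ + w₂ = v}`. -/
def nnRavine {d : ℕ} (v : EuclideanSpace ℝ (Fin d)) :
    Set (EuclideanSpace ℝ (Fin d) × EuclideanSpace ℝ (Fin d)) :=
  {w | w.1 + w.2 = v}

/-- The set of minimizers `S`. -/
def nnSol {d : ℕ} (v : EuclideanSpace ℝ (Fin d)) :
    Set (EuclideanSpace ℝ (Fin d) × EuclideanSpace ℝ (Fin d)) :=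
  {w | w.1 + w.2 = v ∧ ⟪w.1, v⟫ = ‖w.1‖ * ‖v‖ ∧ ⟪w.2, v⟫ = ‖w.2‖ * ‖v‖ ∧
    ‖v‖ / 8 ≤ ‖w.1‖ ∧ ‖w.1‖ ≤ 2 * ‖v‖ ∧ ‖v‖ / 8 ≤ ‖w.2‖ ∧ ‖w.2‖ ≤ 2 * ‖v‖}

/-- Euclidean distance on `ℝ^d × ℝ^d`. -/
noncomputable def nnDist {d : ℕ}
    (w w' : EuclideanSpace ℝ (Fin d) × EuclideanSpace ℝ (Fin d)) : ℝ :=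
  Real.sqrt (‖w.1 - w'.1‖ ^ 2 + ‖w.2 - w'.2‖ ^ 2)

/-- Euclidean distance from `w` to the solution set `S`. -/
noncomputable def nnDistSol {d : ℕ} (v : EuclideanSpace ℝ (Fin d))
    (w : EuclideanSpace ℝ (Fin d) × EuclideanSpace ℝ (Fin d)) : ℝ :=
  sInf (nnDist w '' nnSol v)

/-- `u^⊥`: the orthogonal projection of `u` onto the orthogonal complement of
`span{v}` (for `v ≠ 0`). -/
noncomputable def perpPart {d : ℕ} (v u : EuclideanSpace ℝ (Fin d)) :
    EuclideanSpace ℝ (Fin d) :=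
  u - ((⟪u, v⟫ / ‖v‖ ^ 2) • v)

section Aux
open Real Set

lemma nonneg_of_deriv' {F F' : ℝ → ℝ} (h0 : F 0 = 0)
    (hd : ∀ x, HasDerivAt F (F' x) x) (hnn : ∀ x, 0 ≤ x → 0 ≤ F' x)
    {t : ℝ} (ht : 0 ≤ t) : 0 ≤ F t := by
  have hmono : MonotoneOn F (Ici (0:ℝ)) := by
    apply monotoneOn_of_deriv_nonneg (convex_Ici 0)
    · exact (fun x _ => (hd x).continuousAt.continuousWithinAt)
    · exact fun x hx => ((hd x).differentiableAt.differentiableWithinAt)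
    · intro x hx
      rw [(hd x).deriv]
      exact hnn x (le_of_lt (by simpa using hx))
  calc (0:ℝ) = F 0 := h0.symm
  _ ≤ F t := hmono (self_mem_Ici) ht ht

lemma sin_ge_sub_cube' {t : ℝ} (ht : 0 ≤ t) : t - t^3/6 ≤ Real.sin t := by
  have := nonneg_of_deriv' (F := fun x => Real.sin x - x + x^3/6)
    (F' := fun x => Real.cos x - 1 + x^2/2) (by norm_num)
    (fun x => by
      have h1 := (Real.hasDerivAt_sin x).sub (hasDerivAt_id x)
      have h2 := (hasDerivAt_pow 3 x).div_const 6
      have := h1.add h2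
      refine this.congr_deriv ?_
      push_cast; ring)
    (fun x hx => by nlinarith [Real.one_sub_sq_div_two_le_cos (x := x)]) ht
  linarith

lemma g_le_cube {t : ℝ} (ht : 0 ≤ t) : Real.sin t - t * Real.cos t ≤ t^3/3 := by
  have := nonneg_of_deriv' (F := fun x => x^3/3 - (Real.sin x - x * Real.cos x))
    (F' := fun x => x^2 - x * Real.sin x) (by norm_num)
    (fun x => by
      have h2 := (Real.hasDerivAt_sin x).sub ((hasDerivAt_id x).mul (Real.hasDerivAt_cos x))
      have h1 := (hasDerivAt_pow 3 x).div_const 3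
      have := h1.sub h2
      refine this.congr_deriv ?_
      simp only [id_eq]; push_cast; ring)
    (fun x hx => by nlinarith [Real.sin_le hx]) ht
  linarith

lemma g_ge_cube {t : ℝ} (ht : 0 ≤ t) : t^3/3 - t^5/30 ≤ Real.sin t - t * Real.cos t := by
  have := nonneg_of_deriv' (F := fun x => (Real.sin x - x * Real.cos x) - x^3/3 + x^5/30)
    (F' := fun x => x * Real.sin x - x^2 + x^4/6) (by norm_num)
    (fun x => by
      have h2 := (Real.hasDerivAt_sin x).sub ((hasDerivAt_id x).mul (Real.hasDerivAt_cos x))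
      have h1 := (hasDerivAt_pow 3 x).div_const 3
      have h3 := (hasDerivAt_pow 5 x).div_const 30
      have := (h2.sub h1).add h3
      refine this.congr_deriv ?_
      simp only [id_eq]; push_cast; ring)
    (fun x hx => by
      have := sin_ge_sub_cube' hx
      nlinarith) ht
  linarith

lemma pure_ineq {x y : ℝ} (hx : 0 ≤ x) (hy : 0 ≤ y) (hxy : x ≤ 49*y) (hyx : y ≤ 49*x) :
    (x+y)^3/3 ≤ (199/100)*((x+y)*(x*y)) + (199/200)*(999/3000)*(x^3+y^3) := by
  have h1 : x^3 ≤ 49*(x^2*y) := by nlinarith [mul_le_mul_of_nonneg_left hxy (sq_nonneg x)]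
  have h2 : y^3 ≤ 49*(x*y^2) := by nlinarith [mul_le_mul_of_nonneg_left hyx (sq_nonneg y)]
  nlinarith [mul_nonneg (mul_nonneg hx hx) hy, mul_nonneg hx (mul_nonneg hy hy)]

set_option maxHeartbeats 1000000 in
lemma final_numeric {V a b p x y : ℝ} (hV : 0 < V)
    (ha1 : V/16 ≤ a) (ha2 : a ≤ 3*V) (hb1 : V/16 ≤ b) (hb2 : b ≤ 3*V)
    (hx0 : 0 ≤ x) (hx1 : x ≤ 1/10) (hy0 : 0 ≤ y) (hy1 : y ≤ 1/10)
    (hap : a * Real.sin x = p) (hbp : b * Real.sin y = p)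
    (hVeq : V = a * Real.cos x + b * Real.cos y) :
    (Real.sin (x+y) - (x+y)*Real.cos (x+y)) * a * b
      - ((Real.sin x - x*Real.cos x) * a * V + (Real.sin y - y*Real.cos y) * b * V)
      ≤ 2*(x+y)*p^2 := by
  have ha0 : 0 < a := lt_of_lt_of_le (by positivity) ha1
  have hb0 : 0 < b := lt_of_lt_of_le (by positivity) hb1
  have hx2 : x^2 ≤ 1/100 := by nlinarith
  have hy2 : y^2 ≤ 1/100 := by nlinarith
  have hsx_ge : (599/600)*x ≤ Real.sin x := by
    have h1 := sin_ge_sub_cube' hx0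
    have h2 : x^3 ≤ x*(1/100) := by nlinarith [mul_le_mul_of_nonneg_left hx2 hx0]
    linarith
  have hsy_ge : (599/600)*y ≤ Real.sin y := by
    have h1 := sin_ge_sub_cube' hy0
    have h2 : y^3 ≤ y*(1/100) := by nlinarith [mul_le_mul_of_nonneg_left hy2 hy0]
    linarith
  have hcx : (199/200:ℝ) ≤ Real.cos x := by
    have := Real.one_sub_sq_div_two_le_cos (x := x); linarith
  have hcy : (199/200:ℝ) ≤ Real.cos y := by
    have := Real.one_sub_sq_div_two_le_cos (x := y); linarith
  have hVlb : (199/200)*(a+b) ≤ V := by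
    rw [hVeq]
    nlinarith [mul_le_mul_of_nonneg_left hcx ha0.le, mul_le_mul_of_nonneg_left hcy hb0.le]
  have haV : (199/200)*(a*b) ≤ a*V := by
    have h1 : (199/200)*b ≤ V := by linarith
    calc (199/200)*(a*b) = a*((199/200)*b) := by ring
    _ ≤ a*V := mul_le_mul_of_nonneg_left h1 ha0.le
  have hbV : (199/200)*(a*b) ≤ b*V := by
    have h1 : (199/200)*a ≤ V := by linarith
    calc (199/200)*(a*b) = b*((199/200)*a) := by ring
    _ ≤ b*V := mul_le_mul_of_nonneg_left h1 hb0.le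
  have hp2 : (199/200)*(a*b*(x*y)) ≤ p^2 := by
    have e1 : a*((599/600)*x) ≤ a*Real.sin x := mul_le_mul_of_nonneg_left hsx_ge ha0.le
    have e2 : b*((599/600)*y) ≤ b*Real.sin y := mul_le_mul_of_nonneg_left hsy_ge hb0.le
    have e3 : (a*((599/600)*x))*(b*((599/600)*y)) ≤ (a*Real.sin x)*(b*Real.sin y) :=
      mul_le_mul e1 e2 (by positivity) (by nlinarith)
    rw [hap, hbp] at e3
    nlinarith [mul_nonneg (mul_nonneg ha0.le hb0.le) (mul_nonneg hx0 hy0)]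
  have hx49 : x ≤ 49*y := by
    have t1 : (V/16)*((599/600)*x) ≤ a*((599/600)*x) :=
      mul_le_mul_of_nonneg_right ha1 (by positivity)
    have t2 : a*((599/600)*x) ≤ a*Real.sin x := mul_le_mul_of_nonneg_left hsx_ge ha0.le
    have t3 : b*Real.sin y ≤ b*y := mul_le_mul_of_nonneg_left (Real.sin_le hy0) hb0.le
    have t4 : b*y ≤ (3*V)*y := mul_le_mul_of_nonneg_right hb2 hy0
    have key : (V/16)*((599/600)*x) ≤ (3*V)*y := by
      rw [hap] at t2; rw [hbp] at t3; linarith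
    rw [← mul_le_mul_iff_right₀ hV]
    calc V*x = (9600/599)*((V/16)*((599/600)*x)) := by ring
    _ ≤ (9600/599)*((3*V)*y) := by linarith
    _ ≤ V*(49*y) := by nlinarith [mul_nonneg hV.le hy0]
  have hy49 : y ≤ 49*x := by
    have t1 : (V/16)*((599/600)*y) ≤ b*((599/600)*y) :=
      mul_le_mul_of_nonneg_right hb1 (by positivity)
    have t2 : b*((599/600)*y) ≤ b*Real.sin y := mul_le_mul_of_nonneg_left hsy_ge hb0.le
    have t3 : a*Real.sin x ≤ a*x := mul_le_mul_of_nonneg_left (Real.sin_le hx0) ha0.le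
    have t4 : a*x ≤ (3*V)*x := mul_le_mul_of_nonneg_right ha2 hx0
    have key : (V/16)*((599/600)*y) ≤ (3*V)*x := by
      rw [hbp] at t2; rw [hap] at t3; linarith
    rw [← mul_le_mul_iff_right₀ hV]
    calc V*y = (9600/599)*((V/16)*((599/600)*y)) := by ring
    _ ≤ (9600/599)*((3*V)*x) := by linarith
    _ ≤ V*(49*x) := by nlinarith [mul_nonneg hV.le hx0]
  have hab : (0:ℝ) ≤ a*b := by positivity
  have hA : (Real.sin (x+y) - (x+y)*Real.cos (x+y))*a*b ≤ (x+y)^3/3*(a*b) := by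
    have h := g_le_cube (add_nonneg hx0 hy0)
    calc (Real.sin (x+y) - (x+y)*Real.cos (x+y))*a*b
        = (Real.sin (x+y) - (x+y)*Real.cos (x+y))*(a*b) := by ring
    _ ≤ (x+y)^3/3*(a*b) := mul_le_mul_of_nonneg_right h hab
  have hBx' : (999/3000)*x^3 ≤ Real.sin x - x*Real.cos x := by
    have h1 := g_ge_cube hx0
    have h2 : x^5 ≤ x^3*(1/100) := by nlinarith [mul_le_mul_of_nonneg_left hx2 (pow_nonneg hx0 3)]
    linarith
  have hBy' : (999/3000)*y^3 ≤ Real.sin y - y*Real.cos y := by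
    have h1 := g_ge_cube hy0
    have h2 : y^5 ≤ y^3*(1/100) := by nlinarith [mul_le_mul_of_nonneg_left hy2 (pow_nonneg hy0 3)]
    linarith
  have hBx : (999/3000)*x^3*((199/200)*(a*b)) ≤ (Real.sin x - x*Real.cos x)*(a*V) :=
    mul_le_mul hBx' haV (by positivity) (le_trans (by positivity) hBx')
  have hBy : (999/3000)*y^3*((199/200)*(a*b)) ≤ (Real.sin y - y*Real.cos y)*(b*V) :=
    mul_le_mul hBy' hbV (by positivity) (le_trans (by positivity) hBy')
  have hpure := mul_le_mul_of_nonneg_right (pure_ineq hx0 hy0 hx49 hy49) hab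
  have hfin : (199/100)*((x+y)*(x*y))*(a*b) ≤ 2*(x+y)*p^2 := by
    calc (199/100)*((x+y)*(x*y))*(a*b) = 2*(x+y)*((199/200)*(a*b*(x*y))) := by ring
    _ ≤ 2*(x+y)*p^2 := mul_le_mul_of_nonneg_left hp2 (by positivity)
  linarith [hA, hBx, hBy, hpure, hfin]

end Aux

section Geom

variable {d : ℕ} (v : EuclideanSpace ℝ (Fin d))

lemma perpPart_add (u u' : EuclideanSpace ℝ (Fin d)) :
    perpPart v (u + u') = perpPart v u + perpPart v u' := by
  simp only [perpPart, inner_add_left, add_div, add_smul]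
  abel

lemma perpPart_sub (u u' : EuclideanSpace ℝ (Fin d)) :
    perpPart v (u - u') = perpPart v u - perpPart v u' := by
  simp only [perpPart, inner_sub_left, sub_div, sub_smul]
  abel

lemma perpPart_smul_self (c : ℝ) : perpPart v (c • v) = 0 := by
  rcases eq_or_ne v 0 with h | h
  · simp [perpPart, h]
  · have hV : (0:ℝ) < ‖v‖ := norm_pos_iff.mpr h
    simp only [perpPart, real_inner_smul_left, real_inner_self_eq_norm_sq]
    rw [mul_div_assoc, div_self (by positivity), mul_one, sub_self]

lemma perpPart_self : perpPart v v = 0 := by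
  have := perpPart_smul_self v 1
  simpa using this

lemma perp_sq (hv : v ≠ 0) (u : EuclideanSpace ℝ (Fin d)) :
    ‖perpPart v u‖ ^ 2 = ‖u‖ ^ 2 - (⟪u, v⟫ / ‖v‖) ^ 2 := by
  have hV : (0:ℝ) < ‖v‖ := norm_pos_iff.mpr hv
  rw [perpPart, norm_sub_sq_real, real_inner_smul_right, norm_smul]
  rw [mul_pow, Real.norm_eq_abs, sq_abs]
  field_simp
  ring

lemma perp_le_norm (hv : v ≠ 0) (u : EuclideanSpace ℝ (Fin d)) :
    ‖perpPart v u‖ ≤ ‖u‖ := by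
  have h := perp_sq v hv u
  have h2 : ‖perpPart v u‖ ^ 2 ≤ ‖u‖ ^ 2 := by nlinarith [sq_nonneg (⟪u, v⟫ / ‖v‖)]
  calc ‖perpPart v u‖ = Real.sqrt (‖perpPart v u‖ ^ 2) := (Real.sqrt_sq (norm_nonneg _)).symm
  _ ≤ Real.sqrt (‖u‖ ^ 2) := Real.sqrt_le_sqrt h2
  _ = ‖u‖ := Real.sqrt_sq (norm_nonneg _)

lemma norm_mul_sin_angle (hv : v ≠ 0) (u : EuclideanSpace ℝ (Fin d)) :
    ‖u‖ * Real.sin (angle u v) = ‖perpPart v u‖ := by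
  have hV : (0:ℝ) < ‖v‖ := norm_pos_iff.mpr hv
  have h := sin_angle_mul_norm_mul_norm u v
  have hp := perp_sq v hv u
  have key : ⟪u, u⟫ * ⟪v, v⟫ - ⟪u, v⟫ * ⟪u, v⟫ = (‖perpPart v u‖ * ‖v‖) ^ 2 := by
    rw [real_inner_self_eq_norm_sq, real_inner_self_eq_norm_sq]
    rw [div_pow] at hp
    have hp2 : ⟪u, v⟫ ^ 2 = (‖u‖ ^ 2 - ‖perpPart v u‖ ^ 2) * ‖v‖ ^ 2 := by
      have h3 : ⟪u, v⟫ ^ 2 / ‖v‖ ^ 2 = ‖u‖ ^ 2 - ‖perpPart v u‖ ^ 2 := by linarith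
      rwa [div_eq_iff (by positivity)] at h3
    linear_combination -hp2
  rw [key, Real.sqrt_sq (by positivity)] at h
  have : Real.sin (angle u v) * (‖u‖ * ‖v‖) = ‖u‖ * Real.sin (angle u v) * ‖v‖ := by ring
  rw [this] at h
  exact mul_right_cancel₀ (ne_of_gt hV) h

lemma norm_mul_cos_angle (hv : v ≠ 0) (u : EuclideanSpace ℝ (Fin d)) (hu : u ≠ 0) :
    ‖u‖ * Real.cos (angle u v) = ⟪u, v⟫ / ‖v‖ := by
  have hV : (0:ℝ) < ‖v‖ := norm_pos_iff.mpr hv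
  have hU : (0:ℝ) < ‖u‖ := norm_pos_iff.mpr hu
  rw [cos_angle]
  rw [show ‖u‖ * ‖v‖ = ‖v‖ * ‖u‖ from mul_comm _ _, ← div_div, mul_comm ‖u‖ _,
    div_mul_cancel₀ _ (ne_of_gt hU)]

end Geom

set_option maxHeartbeats 1000000

/-- **Aiming towards the solution set on the ravine.**
There is `δ > 0` such that for every `w = (w₁, w₂) ∈ M` with `w₁ ≠ 0`, `w₂ ≠ 0` and
`dist(w, S) < δ`:
`θ₁‖w₁^⊥‖² + θ₂‖w₂^⊥‖² + (θ₁ + θ₂)‖w₁^⊥‖‖w₂^⊥‖ ≥ 2π f(w)`,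
i.e. the aiming inequality `⟨∇f(w), w − P_S(w)⟩ ≥ f(w)`. -/
theorem nn_aiming_on_ravine (d : ℕ) (hd : 1 ≤ d)
    (v : EuclideanSpace ℝ (Fin d)) (hv : v ≠ 0) :
    ∃ δ > (0 : ℝ), ∀ w : EuclideanSpace ℝ (Fin d) × EuclideanSpace ℝ (Fin d),
      w ∈ nnRavine v → w.1 ≠ 0 → w.2 ≠ 0 → nnDistSol v w < δ →
      2 * Real.pi * nnLoss v w ≤
        angle w.1 v * ‖perpPart v w.1‖ ^ 2 + angle w.2 v * ‖perpPart v w.2‖ ^ 2 +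
          (angle w.1 v + angle w.2 v) * ‖perpPart v w.1‖ * ‖perpPart v w.2‖ := by
  have hV : (0:ℝ) < ‖v‖ := norm_pos_iff.mpr hv
  refine ⟨‖v‖/100, by positivity, ?_⟩
  intro w hM h1 h2 hdist
  rw [nnDistSol] at hdist
  have hM' : w.1 + w.2 = v := hM
  -- S is nonempty
  have hn : ‖(1/2:ℝ) • v‖ = (1/2)*‖v‖ := by
    rw [norm_smul]; simp [Real.norm_eq_abs]
  have hin : ⟪(1/2:ℝ) • v, v⟫ = ‖(1/2:ℝ) • v‖*‖v‖ := by
    rw [real_inner_smul_left, real_inner_self_eq_norm_sq, hn]; ring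
  have hmid : (((1/2:ℝ) • v, (1/2:ℝ) • v) :
      EuclideanSpace ℝ (Fin d) × EuclideanSpace ℝ (Fin d)) ∈ nnSol v := by
    refine ⟨?_, hin, hin, ?_, ?_, ?_, ?_⟩
    · show (1/2:ℝ) • v + (1/2:ℝ) • v = v
      rw [← add_smul]; norm_num
    all_goals rw [hn]; linarith
  obtain ⟨r, ⟨s, hsS, rfl⟩, hrs⟩ :=
    exists_lt_of_csInf_lt (Set.Nonempty.image _ ⟨_, hmid⟩) hdist
  obtain ⟨hssum, hsi1, hsi2, hs18, hs12, hs28, hs22⟩ := hsS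
  -- componentwise distances
  have hd1 : ‖w.1 - s.1‖ < ‖v‖/100 := by
    have hle : ‖w.1 - s.1‖ ≤ nnDist w s := by
      rw [nnDist]
      calc ‖w.1 - s.1‖ = Real.sqrt (‖w.1 - s.1‖^2) := (Real.sqrt_sq (norm_nonneg _)).symm
      _ ≤ _ := Real.sqrt_le_sqrt (le_add_of_nonneg_right (sq_nonneg _))
    linarith
  have hd2 : ‖w.2 - s.2‖ < ‖v‖/100 := by
    have hle : ‖w.2 - s.2‖ ≤ nnDist w s := by
      rw [nnDist]
      calc ‖w.2 - s.2‖ = Real.sqrt (‖w.2 - s.2‖^2) := (Real.sqrt_sq (norm_nonneg _)).symm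
      _ ≤ _ := Real.sqrt_le_sqrt (le_add_of_nonneg_left (sq_nonneg _))
    linarith
  -- norm bounds
  have hna1 := abs_norm_sub_norm_le w.1 s.1
  have hna2 := abs_norm_sub_norm_le w.2 s.2
  rw [abs_le] at hna1 hna2
  have ha1 : ‖v‖/16 ≤ ‖w.1‖ := by linarith
  have ha2 : ‖w.1‖ ≤ 3*‖v‖ := by linarith
  have hb1 : ‖v‖/16 ≤ ‖w.2‖ := by linarith
  have hb2 : ‖w.2‖ ≤ 3*‖v‖ := by linarith
  have ha1' : (23/200)*‖v‖ ≤ ‖w.1‖ := by linarith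
  have hb1' : (23/200)*‖v‖ ≤ ‖w.2‖ := by linarith
  have ha0 : (0:ℝ) < ‖w.1‖ := norm_pos_iff.mpr h1
  have hb0 : (0:ℝ) < ‖w.2‖ := norm_pos_iff.mpr h2
  -- s components are parallel to v, hence perp parts of w are small
  have hz1 : perpPart v s.1 = 0 := by
    have hpar := inner_eq_norm_mul_iff_real.mp hsi1
    have h2 := congrArg (fun z : EuclideanSpace ℝ (Fin d) => (‖v‖)⁻¹ • z) hpar
    simp only [smul_smul] at h2
    rw [inv_mul_cancel₀ (ne_of_gt hV), one_smul] at h2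
    rw [h2, perpPart_smul_self]
  have hz2 : perpPart v s.2 = 0 := by
    have hpar := inner_eq_norm_mul_iff_real.mp hsi2
    have h2 := congrArg (fun z : EuclideanSpace ℝ (Fin d) => (‖v‖)⁻¹ • z) hpar
    simp only [smul_smul] at h2
    rw [inv_mul_cancel₀ (ne_of_gt hV), one_smul] at h2
    rw [h2, perpPart_smul_self]
  have hp1 : ‖perpPart v w.1‖ < ‖v‖/100 := by
    calc ‖perpPart v w.1‖ = ‖perpPart v (w.1 - s.1)‖ := by rw [perpPart_sub, hz1, sub_zero]
    _ ≤ ‖w.1 - s.1‖ := perp_le_norm v hv _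
    _ < ‖v‖/100 := hd1
  -- perp parts are opposite
  have hpq : ‖perpPart v w.2‖ = ‖perpPart v w.1‖ := by
    have h0 : perpPart v w.1 + perpPart v w.2 = 0 := by
      rw [← perpPart_add, hM', perpPart_self]
    have : perpPart v w.2 = -perpPart v w.1 := eq_neg_of_add_eq_zero_right h0
    rw [this, norm_neg]
  -- inner product components
  have hadd : ⟪w.1, v⟫ + ⟪w.2, v⟫ = ‖v‖^2 := by
    rw [← inner_add_left, hM', real_inner_self_eq_norm_sq]
  have hsum : ⟪w.1, v⟫/‖v‖ + ⟪w.2, v⟫/‖v‖ = ‖v‖ := by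
    rw [← add_div, hadd, sq, mul_div_assoc, div_self (ne_of_gt hV), mul_one]
  -- lower bounds on inner products
  have hCS1 : |⟪w.1 - s.1, v⟫| ≤ ‖w.1 - s.1‖*‖v‖ := abs_real_inner_le_norm _ _
  have hCS2 : |⟪w.2 - s.2, v⟫| ≤ ‖w.2 - s.2‖*‖v‖ := abs_real_inner_le_norm _ _
  rw [abs_le, inner_sub_left] at hCS1 hCS2
  have hc1 : (23/200)*‖v‖^2 ≤ ⟪w.1, v⟫ := by
    have m1 := mul_le_mul_of_nonneg_right hs18 hV.le
    have m2 := mul_le_mul_of_nonneg_right hd1.le hV.le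
    linarith only [hCS1.1, hsi1, m1, m2]
  have hc2 : (23/200)*‖v‖^2 ≤ ⟪w.2, v⟫ := by
    have m1 := mul_le_mul_of_nonneg_right hs28 hV.le
    have m2 := mul_le_mul_of_nonneg_right hd2.le hV.le
    linarith only [hCS2.1, hsi2, m1, m2]
  -- cos/sin identities
  have he1 := norm_mul_cos_angle v hv w.1 h1
  have he2 := norm_mul_cos_angle v hv w.2 h2
  have he3 := norm_mul_sin_angle v hv w.1
  have he4 := norm_mul_sin_angle v hv w.2
  have hx0 := angle_nonneg w.1 v
  have hy0 := angle_nonneg w.2 v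
  have hxpi := angle_le_pi w.1 v
  have hypi := angle_le_pi w.2 v
  -- cos positivity
  have hcos1 : 0 < Real.cos (angle w.1 v) := by
    rcases le_or_gt (Real.cos (angle w.1 v)) 0 with h | h
    · exfalso
      have h3 : ‖w.1‖ * Real.cos (angle w.1 v) ≤ 0 := mul_nonpos_of_nonneg_of_nonpos ha0.le h
      rw [he1] at h3
      have h4 : (0:ℝ) < ⟪w.1, v⟫/‖v‖ :=
        div_pos (lt_of_lt_of_le (mul_pos (by norm_num) (pow_pos hV 2)) hc1) hV
      linarith
    · exact h
  have hcos2 : 0 < Real.cos (angle w.2 v) := by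
    rcases le_or_gt (Real.cos (angle w.2 v)) 0 with h | h
    · exfalso
      have h3 : ‖w.2‖ * Real.cos (angle w.2 v) ≤ 0 := mul_nonpos_of_nonneg_of_nonpos hb0.le h
      rw [he2] at h3
      have h4 : (0:ℝ) < ⟪w.2, v⟫/‖v‖ :=
        div_pos (lt_of_lt_of_le (mul_pos (by norm_num) (pow_pos hV 2)) hc2) hV
      linarith
    · exact h
  have hxhalf : angle w.1 v < Real.pi/2 := by
    by_contra h
    push_neg at h
    have := Real.cos_nonpos_of_pi_div_two_le_of_le h (by linarith [Real.pi_pos])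
    linarith
  have hyhalf : angle w.2 v < Real.pi/2 := by
    by_contra h
    push_neg at h
    have := Real.cos_nonpos_of_pi_div_two_le_of_le h (by linarith [Real.pi_pos])
    linarith
  -- x, y ≤ 1/10
  have hsinx_le : Real.sin (angle w.1 v) ≤ 2/23 := by
    have hs0 : 0 ≤ Real.sin (angle w.1 v) := Real.sin_nonneg_of_nonneg_of_le_pi hx0 hxpi
    have h5 : ‖w.1‖ * Real.sin (angle w.1 v) < ‖v‖/100 := by rw [he3]; exact hp1
    have h6 := mul_le_mul_of_nonneg_right ha1' hs0
    by_contra hcon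
    push_neg at hcon
    have h8 : 23/200*‖v‖*(2/23) < 23/200*‖v‖*Real.sin (angle w.1 v) :=
      mul_lt_mul_of_pos_left hcon (by linarith only [hV])
    linarith only [h5, h6, h8, hV]
  have hsiny_le : Real.sin (angle w.2 v) ≤ 2/23 := by
    have hs0 : 0 ≤ Real.sin (angle w.2 v) := Real.sin_nonneg_of_nonneg_of_le_pi hy0 hypi
    have h5 : ‖w.2‖ * Real.sin (angle w.2 v) < ‖v‖/100 := by rw [he4, hpq]; exact hp1
    have h6 := mul_le_mul_of_nonneg_right hb1' hs0
    by_contra hcon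
    push_neg at hcon
    have h8 : 23/200*‖v‖*(2/23) < 23/200*‖v‖*Real.sin (angle w.2 v) :=
      mul_lt_mul_of_pos_left hcon (by linarith only [hV])
    linarith only [h5, h6, h8, hV]
  have hx1 : angle w.1 v ≤ 1/10 := by
    by_contra h
    push_neg at h
    have hmem1 : (1/10:ℝ) ∈ Set.Icc (-(Real.pi/2)) (Real.pi/2) :=
      ⟨by linarith only [Real.pi_gt_three], by linarith only [Real.pi_gt_three]⟩
    have hmem2 : angle w.1 v ∈ Set.Icc (-(Real.pi/2)) (Real.pi/2) :=
      ⟨by linarith only [hx0, Real.pi_gt_three], by linarith only [hxhalf]⟩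
    have := Real.strictMonoOn_sin hmem1 hmem2 h
    have hlb := sin_ge_sub_cube' (by norm_num : (0:ℝ) ≤ 1/10)
    norm_num at hlb
    linarith
  have hy1 : angle w.2 v ≤ 1/10 := by
    by_contra h
    push_neg at h
    have hmem1 : (1/10:ℝ) ∈ Set.Icc (-(Real.pi/2)) (Real.pi/2) :=
      ⟨by linarith only [Real.pi_gt_three], by linarith only [Real.pi_gt_three]⟩
    have hmem2 : angle w.2 v ∈ Set.Icc (-(Real.pi/2)) (Real.pi/2) :=
      ⟨by linarith only [hy0, Real.pi_gt_three], by linarith only [hyhalf]⟩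
    have := Real.strictMonoOn_sin hmem1 hmem2 h
    have hlb := sin_ge_sub_cube' (by norm_num : (0:ℝ) ≤ 1/10)
    norm_num at hlb
    linarith
  -- V = a cos x + b cos y
  have hVeq : ‖v‖ = ‖w.1‖ * Real.cos (angle w.1 v) + ‖w.2‖ * Real.cos (angle w.2 v) := by
    rw [he1, he2]; exact hsum.symm
  -- angle w.1 w.2 = x + y
  have hangle12 : angle w.1 w.2 = angle w.1 v + angle w.2 v := by
    have hcab : Real.cos (angle w.1 w.2) * (‖w.1‖ * ‖w.2‖) =
        Real.cos (angle w.1 v + angle w.2 v) * (‖w.1‖ * ‖w.2‖) := by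
      rw [cos_angle_mul_norm_mul_norm, Real.cos_add]
      have hw2 : w.2 = v - w.1 := by rw [← hM']; abel
      have e7 : ⟪w.1, w.2⟫ = ⟪w.1, v⟫ - ‖w.1‖^2 := by
        rw [hw2, inner_sub_right, real_inner_self_eq_norm_sq]
      have hpy := perp_sq v hv w.1
      have e5 : ⟪w.2, v⟫/‖v‖ = ‖v‖ - ⟪w.1, v⟫/‖v‖ := by linarith
      have e6 : ⟪w.1, v⟫/‖v‖*‖v‖ = ⟪w.1, v⟫ := div_mul_cancel₀ _ (ne_of_gt hV)
      have hr : (Real.cos (angle w.1 v)*Real.cos (angle w.2 v)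
          - Real.sin (angle w.1 v)*Real.sin (angle w.2 v))*(‖w.1‖*‖w.2‖)
          = (‖w.1‖*Real.cos (angle w.1 v))*(‖w.2‖*Real.cos (angle w.2 v))
            - (‖w.1‖*Real.sin (angle w.1 v))*(‖w.2‖*Real.sin (angle w.2 v)) := by ring
      rw [hr, he1, he2, he3, he4, hpq, e5, e7]
      linear_combination hpy - e6
    have hcc := mul_right_cancel₀ (ne_of_gt (mul_pos ha0 hb0)) hcab
    exact Real.injOn_cos ⟨angle_nonneg _ _, angle_le_pi _ _⟩
      ⟨add_nonneg hx0 hy0, by linarith only [hx1, hy1, Real.pi_gt_three]⟩ hcc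
  -- rewrite the loss
  have hloss : 2 * Real.pi * nnLoss v w =
      (Real.sin (angle w.1 v + angle w.2 v)
        - (angle w.1 v + angle w.2 v)*Real.cos (angle w.1 v + angle w.2 v)) * ‖w.1‖ * ‖w.2‖
      - ((Real.sin (angle w.1 v) - (angle w.1 v)*Real.cos (angle w.1 v)) * ‖w.1‖ * ‖v‖
        + (Real.sin (angle w.2 v) - (angle w.2 v)*Real.cos (angle w.2 v)) * ‖w.2‖ * ‖v‖) := by
    rw [nnLoss, hangle12, show w.1 + w.2 - v = 0 by rw [hM']; exact sub_self v, norm_zero]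
    have hπ : Real.pi ≠ 0 := Real.pi_ne_zero
    field_simp
    try ring
  have hmain := final_numeric hV ha1 ha2 hb1 hb2 hx0 hx1 hy0 hy1 he3
    (by rw [he4, hpq]) hVeq
  rw [hloss]
  refine le_trans hmain (le_of_eq ?_)
  rw [hpq]
  ring
end

section
/- There exist constants C > 0 and δ > 0 such that for every w = (w₁, w₂) ∈ M with w₁ ≠ 0, w₂ ≠ 0 and dist(w, S) < δ: ‖θ₁w₁ − θ₂w₂‖ ≤ C · dist²(w, S). (Since on M near S the gradient of f is ∇f(w) = (1/(2π))(θ₁w₁ − θ₂w₂, θ₂w₂ − θ₁w₁), this says ‖∇f(w)‖ = O(dist²(w, S)) on M near S.) -/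
set_option maxHeartbeats 4000000


open scoped RealInnerProductSpace
open InnerProductGeometry

/- ### Auxiliary lemmas -/

lemma nn_arctan_le_self {x : ℝ} (hx : 0 ≤ x) : Real.arctan x ≤ x := by
  have hd : ∀ y : ℝ, HasDerivAt (fun x : ℝ => x - Real.arctan x) (1 - 1/(1+y^2)) y :=
    fun y => (hasDerivAt_id y).sub (Real.hasDerivAt_arctan y)
  have h : MonotoneOn (fun x : ℝ => x - Real.arctan x) (Set.Ici 0) := by
    apply monotoneOn_of_deriv_nonneg (convex_Ici 0)
    · exact (continuous_id.sub Real.continuous_arctan).continuousOn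
    · intro y _
      exact ((hd y).differentiableAt).differentiableWithinAt
    · intro y _
      rw [(hd y).deriv]
      have h1 : (0:ℝ) < 1 + y^2 := by positivity
      rw [sub_nonneg, div_le_one h1]
      nlinarith [sq_nonneg y]
  have := h (Set.self_mem_Ici) hx hx
  simpa [Real.arctan_zero] using this

lemma nn_arctan_lb {x : ℝ} (hx : 0 ≤ x) : x - x^3/3 ≤ Real.arctan x := by
  have hd : ∀ y : ℝ, HasDerivAt (fun x : ℝ => Real.arctan x - x + x^3/3)
      (1/(1+y^2) - 1 + 3*y^(3-1)/3) y :=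
    fun y => ((Real.hasDerivAt_arctan y).sub (hasDerivAt_id y)).add
      ((hasDerivAt_pow 3 y).div_const 3)
  have h : MonotoneOn (fun x : ℝ => Real.arctan x - x + x^3/3) (Set.Ici 0) := by
    apply monotoneOn_of_deriv_nonneg (convex_Ici 0)
    · exact ((Real.continuous_arctan.sub continuous_id).add
        ((continuous_pow 3).div_const 3)).continuousOn
    · intro y _
      exact ((hd y).differentiableAt).differentiableWithinAt
    · intro y _
      rw [(hd y).deriv]
      have h1 : (0:ℝ) < 1 + y^2 := by positivity
      have h2 : 1/(1+y^2) - 1 + 3*y^(3-1)/3 = y^4/(1+y^2) := by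
        field_simp
        ring
      rw [h2]
      positivity
  have := h (Set.self_mem_Ici) hx hx
  simp only [Real.arctan_zero] at this
  norm_num at this
  linarith

lemma nn_le_of_sq {x y : ℝ} (hx : 0 ≤ x) (hy : 0 ≤ y) (h : x^2 ≤ y^2) : x ≤ y := by
  nlinarith

lemma nn_decomp_norm_sq {d : ℕ} (v p : EuclideanSpace ℝ (Fin d))
    (hp : ⟪p, v⟫ = 0) (a : ℝ) : ‖a • v + p‖ ^ 2 = a^2 * ‖v‖^2 + ‖p‖^2 := by
  have h2 : ⟪a • v, p⟫ = 0 := by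
    rw [real_inner_smul_left, real_inner_comm, hp, mul_zero]
  rw [norm_add_sq_real, h2, norm_smul, Real.norm_eq_abs, mul_pow, sq_abs]
  ring

lemma nn_aux_angle {d : ℕ} (v p : EuclideanSpace ℝ (Fin d)) (t : ℝ)
    (hv : v ≠ 0) (hp : ⟪p, v⟫ = 0) (ht : 0 < t) :
    angle (t • v + p) v = Real.arctan (‖p‖ / (t * ‖v‖)) := by
  set x := t • v + p with hx
  have hN : 0 < ‖v‖ := norm_pos_iff.mpr hv
  have htN : 0 < t * ‖v‖ := mul_pos ht hN
  have hip : ⟪x, v⟫ = t * ‖v‖^2 := by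
    rw [hx, inner_add_left, real_inner_smul_left, hp, real_inner_self_eq_norm_sq]
    ring
  have hx2 : ‖x‖^2 = (t*‖v‖)^2 + ‖p‖^2 := by
    rw [hx, nn_decomp_norm_sq v p hp t]; ring
  have hx2pos : 0 < ‖x‖^2 := by nlinarith [sq_nonneg ‖p‖]
  have hxpos : 0 < ‖x‖ := by nlinarith [norm_nonneg x]
  have hcos : Real.cos (angle x v) = (t*‖v‖)/‖x‖ := by
    rw [cos_angle, hip]
    field_simp
  have hcospos : 0 < Real.cos (angle x v) := by rw [hcos]; positivity
  have hlt : angle x v < Real.pi/2 := by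
    by_contra h
    push_neg at h
    have := Real.cos_nonpos_of_pi_div_two_le_of_le h
      (by linarith [angle_le_pi x v, Real.pi_pos])
    linarith
  have hsin : Real.sin (angle x v) = ‖p‖/‖x‖ := by
    rw [Real.sin_eq_sqrt_one_sub_cos_sq (angle_nonneg x v) (angle_le_pi x v), hcos]
    rw [show 1 - ((t*‖v‖)/‖x‖)^2 = (‖p‖/‖x‖)^2 by
      field_simp
      nlinarith [hx2]]
    exact Real.sqrt_sq (by positivity)
  rw [← Real.arctan_tan (x := angle x v) (by linarith [angle_nonneg x v, Real.pi_pos]) hlt]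
  congr 1
  rw [Real.tan_eq_sin_div_cos, hsin, hcos]
  rw [div_div_div_cancel_right₀]
  exact ne_of_gt hxpos

lemma nn_arctan_mul_ub {q a : ℝ} (hq : 0 ≤ q) (ha : 0 < a) :
    Real.arctan (q/a) * a ≤ q := by
  have h := nn_arctan_le_self (x := q/a) (by positivity)
  have h2 := mul_le_mul_of_nonneg_right h ha.le
  rwa [div_mul_cancel₀ _ (ne_of_gt ha)] at h2

lemma nn_arctan_mul_lb {q a : ℝ} (hq : 0 ≤ q) (ha : 0 < a) :
    3*a^2*(q - Real.arctan (q/a) * a) ≤ q^3 := by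
  have h := nn_arctan_lb (x := q/a) (by positivity)
  have h2 := mul_le_mul_of_nonneg_right h (by positivity : (0:ℝ) ≤ 3*a^3)
  have e : (q/a - (q/a)^3/3)*(3*a^3) = 3*q*a^2 - q^3 := by
    field_simp
  rw [e] at h2
  nlinarith [h2]

/-- **Gradient size bound on the ravine.**
There are `C > 0` and `δ > 0` such that for every `w = (w₁, w₂) ∈ M` with `w₁ ≠ 0`,
`w₂ ≠ 0` and `dist(w, S) < δ`:  `‖θ₁w₁ − θ₂w₂‖ ≤ C · dist²(w, S)`; since on `M` near
`S` the gradient is `(1/2π)(θ₁w₁ − θ₂w₂, θ₂w₂ − θ₁w₁)`, this says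
`‖∇f(w)‖ = O(dist²(w, S))`. -/
theorem nn_gradient_size_on_ravine (d : ℕ) (hd : 1 ≤ d)
    (v : EuclideanSpace ℝ (Fin d)) (hv : v ≠ 0) :
    ∃ C > (0 : ℝ), ∃ δ > (0 : ℝ),
      ∀ w : EuclideanSpace ℝ (Fin d) × EuclideanSpace ℝ (Fin d),
        w ∈ nnRavine v → w.1 ≠ 0 → w.2 ≠ 0 → nnDistSol v w < δ →
        ‖(angle w.1 v) • w.1 - (angle w.2 v) • w.2‖ ≤ C * nnDistSol v w ^ 2 := by
  have hN : (0:ℝ) < ‖v‖ := norm_pos_iff.mpr hv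
  refine ⟨32/‖v‖, by positivity, ‖v‖/16, by positivity, ?_⟩
  intro w hMem h1 h2 hD
  have hM : w.1 + w.2 = v := hMem
  obtain ⟨N, hNdef⟩ : ∃ x : ℝ, x = ‖v‖ := ⟨_, rfl⟩
  rw [← hNdef] at hD ⊢
  have hN : (0:ℝ) < N := hNdef ▸ hN
  obtain ⟨t, htdef⟩ : ∃ x : ℝ, x = ⟪w.1, v⟫ / N^2 := ⟨_, rfl⟩
  obtain ⟨p, hpdef⟩ : ∃ x : EuclideanSpace ℝ (Fin d), x = w.1 - t • v := ⟨_, rfl⟩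
  have hp : ⟪p, v⟫ = 0 := by
    have e : ⟪w.1 - t • v, v⟫ = ⟪w.1, v⟫ - t*‖v‖^2 := by
      rw [inner_sub_left, real_inner_smul_left, real_inner_self_eq_norm_sq]
    rw [hpdef, e, htdef, ← hNdef]
    field_simp
    ring
  have hw1 : w.1 = t • v + p := by rw [hpdef]; abel
  have hw2 : w.2 = (1-t) • v + (-p) := by
    have e : w.2 = v - w.1 := by rw [← hM]; abel
    rw [e, hw1]; module
  have hpn : ⟪-p, v⟫ = 0 := by rw [inner_neg_left, hp, neg_zero]
  have hq0 : 0 ≤ ‖p‖ := norm_nonneg p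
  -- the solution set is nonempty
  have hS0 : ((2:ℝ)⁻¹ • v, (2:ℝ)⁻¹ • v) ∈ nnSol v := by
    have hnorm : ‖(2:ℝ)⁻¹ • v‖ = 2⁻¹ * ‖v‖ := by
      rw [norm_smul, Real.norm_eq_abs]; norm_num
    have hinner : ⟪(2:ℝ)⁻¹ • v, v⟫ = ‖(2:ℝ)⁻¹ • v‖ * ‖v‖ := by
      rw [real_inner_smul_left, real_inner_self_eq_norm_sq, hnorm]; ring
    have hNv : (0:ℝ) < ‖v‖ := norm_pos_iff.mpr hv
    exact ⟨by rw [← add_smul]; norm_num, hinner, hinner,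
      by rw [hnorm]; linarith, by rw [hnorm]; linarith,
      by rw [hnorm]; linarith, by rw [hnorm]; linarith⟩
  have hne : (nnDist w '' nnSol v).Nonempty := ⟨_, ⟨_, hS0, rfl⟩⟩
  -- parallel form of solutions
  have hpar : ∀ s : EuclideanSpace ℝ (Fin d) × EuclideanSpace ℝ (Fin d), s ∈ nnSol v →
      s.1 = (‖s.1‖ / N) • v ∧ s.2 = (‖s.2‖ / N) • v := by
    intro s hs
    obtain ⟨-, hi1, hi2, -, -, -, -⟩ := hs
    rw [hNdef]
    constructor
    · have h := inner_eq_norm_mul_iff_real.mp hi1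
      rw [div_eq_inv_mul, mul_smul, ← h, inv_smul_smul₀ (by rw [hNdef] at hN; exact ne_of_gt hN)]
    · have h := inner_eq_norm_mul_iff_real.mp hi2
      rw [div_eq_inv_mul, mul_smul, ← h, inv_smul_smul₀ (by rw [hNdef] at hN; exact ne_of_gt hN)]
  -- squared distances to any solution
  have hsq : ∀ s : EuclideanSpace ℝ (Fin d) × EuclideanSpace ℝ (Fin d), s ∈ nnSol v →
      ‖w.1 - s.1‖^2 = (t - ‖s.1‖/N)^2*N^2 + ‖p‖^2 ∧
      ‖w.2 - s.2‖^2 = ((1-t) - ‖s.2‖/N)^2*N^2 + ‖p‖^2 := by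
    intro s hs
    obtain ⟨hs1, hs2⟩ := hpar s hs
    obtain ⟨c1, hc1⟩ : ∃ x : ℝ, x = ‖s.1‖/N := ⟨_, rfl⟩
    obtain ⟨c2, hc2⟩ : ∃ x : ℝ, x = ‖s.2‖/N := ⟨_, rfl⟩
    rw [← hc1] at hs1
    rw [← hc2] at hs2
    rw [← hc1, ← hc2, hNdef]
    constructor
    · have e : w.1 - s.1 = (t - c1) • v + p := by rw [hw1, hs1]; module
      rw [e, nn_decomp_norm_sq v p hp]
    · have e : w.2 - s.2 = ((1-t) - c2) • v + (-p) := by rw [hw2, hs2]; module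
      rw [e, nn_decomp_norm_sq v (-p) hpn, norm_neg]
  -- lower bound on distances
  have hlow : ∀ s ∈ nnSol v, Real.sqrt 2 * ‖p‖ ≤ nnDist w s := by
    intro s hs
    obtain ⟨e1, e2⟩ := hsq s hs
    have hle : 2*‖p‖^2 ≤ ‖w.1 - s.1‖^2 + ‖w.2 - s.2‖^2 := by
      rw [e1, e2]
      nlinarith [sq_nonneg ((t - ‖s.1‖/N)*N), sq_nonneg (((1-t) - ‖s.2‖/N)*N), sq_nonneg N]
    calc Real.sqrt 2 * ‖p‖ = Real.sqrt (2*‖p‖^2) := by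
          rw [Real.sqrt_mul (by norm_num : (0:ℝ) ≤ 2), Real.sqrt_sq hq0]
      _ ≤ nnDist w s := Real.sqrt_le_sqrt hle
  obtain ⟨D, hDdef⟩ : ∃ x : ℝ, x = nnDistSol v w := ⟨_, rfl⟩
  rw [← hDdef] at hD ⊢
  have hDlow : Real.sqrt 2 * ‖p‖ ≤ D := by
    rw [hDdef]
    unfold nnDistSol
    apply le_csInf hne
    rintro b ⟨s, hs, rfl⟩
    exact hlow s hs
  have hD0 : 0 ≤ D := by
    rw [hDdef]
    unfold nnDistSol
    apply le_csInf hne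
    rintro b ⟨s, hs, rfl⟩
    exact Real.sqrt_nonneg _
  have h2q : 2*‖p‖^2 ≤ D^2 := by
    have hs2 : Real.sqrt 2 ^ 2 = 2 := Real.sq_sqrt (by norm_num)
    have h1 := mul_le_mul hDlow hDlow (mul_nonneg (Real.sqrt_nonneg 2) hq0) hD0
    nlinarith [h1, hs2]
  have hqD : ‖p‖ ≤ D := by nlinarith [h2q, hq0, hD0, sq_nonneg ‖p‖]
  -- witness of closeness
  obtain ⟨s, hs, hsd⟩ : ∃ s ∈ nnSol v, nnDist w s < N/16 := by
    by_contra h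
    push_neg at h
    have : N/16 ≤ D := by
      rw [hDdef]
      unfold nnDistSol
      apply le_csInf hne
      rintro b ⟨s, hs', rfl⟩
      exact h s hs'
    linarith
  obtain ⟨e1, e2⟩ := hsq s hs
  obtain ⟨-, -, -, hb1, -, hb3, -⟩ := hs
  rw [← hNdef] at hb1 hb3
  have hd1 : ‖w.1 - s.1‖ ≤ nnDist w s := by
    have h0 : ‖w.1 - s.1‖^2 ≤ ‖w.1 - s.1‖^2 + ‖w.2 - s.2‖^2 :=
      le_add_of_nonneg_right (sq_nonneg _)
    calc ‖w.1 - s.1‖ = Real.sqrt (‖w.1 - s.1‖^2) := (Real.sqrt_sq (norm_nonneg _)).symm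
      _ ≤ nnDist w s := Real.sqrt_le_sqrt h0
  have hd2 : ‖w.2 - s.2‖ ≤ nnDist w s := by
    have h0 : ‖w.2 - s.2‖^2 ≤ ‖w.1 - s.1‖^2 + ‖w.2 - s.2‖^2 :=
      le_add_of_nonneg_left (sq_nonneg _)
    calc ‖w.2 - s.2‖ = Real.sqrt (‖w.2 - s.2‖^2) := (Real.sqrt_sq (norm_nonneg _)).symm
      _ ≤ nnDist w s := Real.sqrt_le_sqrt h0
  have habs1 : |t - ‖s.1‖/N| * N ≤ ‖w.1 - s.1‖ := by
    apply nn_le_of_sq (by positivity) (norm_nonneg _)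
    rw [mul_pow, sq_abs, e1]
    exact le_add_of_nonneg_right (sq_nonneg _)
  have habs2 : |(1-t) - ‖s.2‖/N| * N ≤ ‖w.2 - s.2‖ := by
    apply nn_le_of_sq (by positivity) (norm_nonneg _)
    rw [mul_pow, sq_abs, e2]
    exact le_add_of_nonneg_right (sq_nonneg _)
  have hcN1 : (‖s.1‖/N)*N = ‖s.1‖ := div_mul_cancel₀ _ (ne_of_gt hN)
  have hcN2 : (‖s.2‖/N)*N = ‖s.2‖ := div_mul_cancel₀ _ (ne_of_gt hN)
  have hm1 : (-(|t - ‖s.1‖/N|))*N ≤ (t - ‖s.1‖/N)*N :=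
    mul_le_mul_of_nonneg_right (neg_abs_le _) hN.le
  have hm2 : (-(|(1-t) - ‖s.2‖/N|))*N ≤ ((1-t) - ‖s.2‖/N)*N :=
    mul_le_mul_of_nonneg_right (neg_abs_le _) hN.le
  have hA' : N/16 < t*N := by
    have g1 : |t - ‖s.1‖/N| * N < N/16 := lt_of_le_of_lt (habs1.trans hd1) hsd
    nlinarith [hm1, hcN1, hb1, g1]
  have hB' : N/16 < (1-t)*N := by
    have g2 : |(1-t) - ‖s.2‖/N| * N < N/16 := lt_of_le_of_lt (habs2.trans hd2) hsd
    nlinarith [hm2, hcN2, hb3, g2]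
  have ht : 0 < t := by
    by_contra h
    push_neg at h
    nlinarith [mul_nonneg (neg_nonneg.mpr h) hN.le, hA']
  have ht' : 0 < 1 - t := by
    by_contra h
    push_neg at h
    nlinarith [mul_nonneg (neg_nonneg.mpr h) hN.le, hB']
  obtain ⟨A, hAdef⟩ : ∃ x : ℝ, x = t*N := ⟨_, rfl⟩
  obtain ⟨B, hBdef⟩ : ∃ x : ℝ, x = (1-t)*N := ⟨_, rfl⟩
  have hApos : 0 < A := by rw [hAdef]; positivity
  have hBpos : 0 < B := by rw [hBdef]; positivity
  -- angles
  obtain ⟨θ₁, hθ₁def⟩ : ∃ x : ℝ, x = angle w.1 v := ⟨_, rfl⟩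
  obtain ⟨θ₂, hθ₂def⟩ : ∃ x : ℝ, x = angle w.2 v := ⟨_, rfl⟩
  rw [← hθ₁def, ← hθ₂def]
  have hθ1 : θ₁ = Real.arctan (‖p‖/A) := by
    rw [hθ₁def, hw1, nn_aux_angle v p t hv hp ht, hAdef, hNdef]
  have hθ2 : θ₂ = Real.arctan (‖p‖/B) := by
    rw [hθ₂def, hw2, nn_aux_angle v (-p) (1-t) hv hpn ht', norm_neg, hBdef, hNdef]
  have hθ1nn : 0 ≤ θ₁ := by rw [hθ₁def]; exact angle_nonneg _ _
  have hθ2nn : 0 ≤ θ₂ := by rw [hθ₂def]; exact angle_nonneg _ _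
  -- arctan estimates
  have hub1 : θ₁ * A ≤ ‖p‖ := by
    rw [hθ1]; exact nn_arctan_mul_ub hq0 hApos
  have hub2 : θ₂ * B ≤ ‖p‖ := by
    rw [hθ2]; exact nn_arctan_mul_ub hq0 hBpos
  have hlb1 : 3*A^2*(‖p‖ - θ₁*A) ≤ ‖p‖^3 := by
    rw [hθ1]; exact nn_arctan_mul_lb hq0 hApos
  have hlb2 : 3*B^2*(‖p‖ - θ₂*B) ≤ ‖p‖^3 := by
    rw [hθ2]; exact nn_arctan_mul_lb hq0 hBpos
  -- pass to the uniform lower bound m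
  obtain ⟨m, hmdef⟩ : ∃ x : ℝ, x = N/16 := ⟨_, rfl⟩
  have hm0 : 0 < m := by rw [hmdef]; positivity
  have hmA : m ≤ A := by rw [hmdef, hAdef]; exact hA'.le
  have hmB : m ≤ B := by rw [hmdef, hBdef]; exact hB'.le
  have hqm : ‖p‖ < m := by rw [hmdef]; exact lt_of_le_of_lt hqD hD
  have hmA2 : m^2 ≤ A^2 := pow_le_pow_left₀ hm0.le hmA 2
  have hmB2 : m^2 ≤ B^2 := pow_le_pow_left₀ hm0.le hmB 2
  have hX1 : 3*m^2*(‖p‖ - θ₁*A) ≤ ‖p‖^3 := by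
    have h0 : 0 ≤ ‖p‖ - θ₁*A := by linarith only [hub1]
    have h1 : 3*m^2*(‖p‖ - θ₁*A) ≤ 3*A^2*(‖p‖ - θ₁*A) :=
      mul_le_mul_of_nonneg_right (by linarith only [hmA2]) h0
    linarith only [h1, hlb1]
  have hX2 : 3*m^2*(‖p‖ - θ₂*B) ≤ ‖p‖^3 := by
    have h0 : 0 ≤ ‖p‖ - θ₂*B := by linarith only [hub2]
    have h1 : 3*m^2*(‖p‖ - θ₂*B) ≤ 3*B^2*(‖p‖ - θ₂*B) :=
      mul_le_mul_of_nonneg_right (by linarith only [hmB2]) h0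
    linarith only [h1, hlb2]
  have hY1 : θ₁*m ≤ ‖p‖ := by
    have := mul_le_mul_of_nonneg_left hmA hθ1nn
    linarith only [this, hub1]
  have hY2 : θ₂*m ≤ ‖p‖ := by
    have := mul_le_mul_of_nonneg_left hmB hθ2nn
    linarith only [this, hub2]
  -- decomposition of the gradient vector
  have hT : θ₁ • w.1 - θ₂ • w.2 = (θ₁*t - θ₂*(1-t)) • v + (θ₁+θ₂) • p := by
    rw [hw1, hw2]; module
  have hTn : ‖θ₁ • w.1 - θ₂ • w.2‖ ≤ |θ₁*A - θ₂*B| + (θ₁+θ₂)*‖p‖ := by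
    rw [hT]
    calc ‖(θ₁*t - θ₂*(1-t)) • v + (θ₁+θ₂) • p‖
        ≤ ‖(θ₁*t - θ₂*(1-t)) • v‖ + ‖(θ₁+θ₂) • p‖ := norm_add_le _ _
      _ = |θ₁*t - θ₂*(1-t)| * N + |θ₁+θ₂| * ‖p‖ := by
          rw [norm_smul, norm_smul, Real.norm_eq_abs, Real.norm_eq_abs, hNdef]
      _ = |θ₁*A - θ₂*B| + (θ₁+θ₂)*‖p‖ := by
          rw [abs_of_nonneg (by linarith : (0:ℝ) ≤ θ₁+θ₂)]
          congr 1
          rw [show |θ₁*t - θ₂*(1-t)| * N = |(θ₁*t - θ₂*(1-t)) * N| by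
            rw [abs_mul, abs_of_pos hN]]
          congr 1
          rw [hAdef, hBdef]
          ring
  have hXabs : |θ₁*A - θ₂*B| ≤ (‖p‖ - θ₁*A) + (‖p‖ - θ₂*B) := by
    apply abs_le.mpr
    constructor <;> linarith only [hub1, hub2]
  -- final numeric assembly
  have k1 : 3*m^2*‖θ₁ • w.1 - θ₂ • w.2‖ ≤ 3*m^2 * (|θ₁*A - θ₂*B| + (θ₁+θ₂)*‖p‖) :=
    mul_le_mul_of_nonneg_left hTn (by positivity)
  have k2 : 3*m^2 * |θ₁*A - θ₂*B| ≤ 2*‖p‖^3 := by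
    have h1 := mul_le_mul_of_nonneg_left hXabs (by positivity : (0:ℝ) ≤ 3*m^2)
    linarith only [h1, hX1, hX2]
  have k3 : 3*m^2*((θ₁+θ₂)*‖p‖) ≤ 6*m*‖p‖^2 := by
    have j1 : θ₁*m*‖p‖ ≤ ‖p‖*‖p‖ := mul_le_mul_of_nonneg_right hY1 hq0
    have j2 : θ₂*m*‖p‖ ≤ ‖p‖*‖p‖ := mul_le_mul_of_nonneg_right hY2 hq0
    have j1' : 3*m*(θ₁*m*‖p‖) ≤ 3*m*(‖p‖*‖p‖) :=
      mul_le_mul_of_nonneg_left j1 (by positivity)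
    have j2' : 3*m*(θ₂*m*‖p‖) ≤ 3*m*(‖p‖*‖p‖) :=
      mul_le_mul_of_nonneg_left j2 (by positivity)
    linarith only [j1', j2']
  have k4 : 2*‖p‖^3 ≤ 2*m*‖p‖^2 := by
    have := mul_le_mul_of_nonneg_right hqm.le (by positivity : (0:ℝ) ≤ 2*‖p‖^2)
    linarith only [this]
  have k5 : 8*m*‖p‖^2 ≤ 4*m*D^2 := by
    have := mul_le_mul_of_nonneg_left h2q (by positivity : (0:ℝ) ≤ 4*m)
    linarith only [this]
  have key : 3*m^2*‖θ₁ • w.1 - θ₂ • w.2‖ ≤ 4*m*D^2 := by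
    linarith only [k1, k2, k3, k4, k5]
  -- conclude
  rw [div_mul_eq_mul_div, le_div_iff₀ hN]
  have hfin : (3*m)*(‖θ₁ • w.1 - θ₂ • w.2‖*N) ≤ (3*m)*(32*D^2) := by
    have hNm : N = 16*m := by rw [hmdef]; ring
    rw [hNm]
    linarith only [key, mul_nonneg hm0.le (sq_nonneg D)]
  exact le_of_mul_le_mul_left hfin (by positivity)
end
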